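/- Let α > 1, Φ > 0, σ > 0 and 0 < λ ≤ 1/√(2α−1). Set m := α(α−1)λ²/(1−αλ²) and δ := (Φ/σ)·αλ(1−λ)^{α−1}(1+α/m)(1+λα/m)^{m−1}, and define the intrinsic PPR density ψ(y) := 1 − ((1−y/δ)⁺)^α (1 + (α/m)(y/δ))^m for y ≥ 0. Then: (i) ψ is nonnegative and ψ(0) = ψ'(0) = 0; (ii) ψ is continuously differentiable on [0,∞), nondecreasing, and bounded with sup ψ = 1; (iii) ψ'(y) − yψ''(y) ≥ 0 for every y ∈ (0,δ); (iv) ψ is concave on [δλ, ∞). -/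

import Mathlib

open Set

namespace S15

/-- derivative of `(max x 0) ^ α` at `0` is `0` when `α > 1`. -/
lemma maxpow_zero {α : ℝ} (hα : 1 < α) :
    HasDerivAt (fun x : ℝ => max x 0 ^ α) 0 0 := by
  rw [hasDerivAt_iff_tendsto_slope]
  have h0 : (max (0:ℝ) 0 : ℝ) ^ α = 0 := by
    simp [Real.zero_rpow (by linarith : α ≠ 0)]
  apply squeeze_zero_norm (a := fun x : ℝ => |x| ^ (α - 1))
  · intro x
    rcases eq_or_ne x 0 with rfl | hx
    · simp [slope, Real.rpow_nonneg]
    · have hs : slope (fun x : ℝ => max x 0 ^ α) 0 x = max x 0 ^ α / x := by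
        simp [slope, Real.zero_rpow (by linarith : α ≠ 0), inv_mul_eq_div]
      rw [hs, Real.norm_eq_abs, abs_div, abs_of_nonneg (Real.rpow_nonneg (le_max_right _ _) _),
        div_le_iff₀ (abs_pos.2 hx)]
      have e : |x| ^ α = |x| ^ (α - 1) * |x| := by
        rw [← Real.rpow_add_one (abs_ne_zero.2 hx) (α - 1)]; norm_num
      calc max x 0 ^ α ≤ |x| ^ α :=
            Real.rpow_le_rpow (le_max_right _ _)
              (max_le (le_abs_self x) (abs_nonneg x)) (by linarith)
        _ = |x| ^ (α - 1) * |x| := e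
  · have hc : ContinuousAt (fun t : ℝ => |t| ^ (α - 1)) 0 :=
      (Real.continuousAt_rpow_const _ (α - 1) (Or.inr (by linarith))).comp
        continuous_abs.continuousAt
    have := hc.tendsto
    simpa [Real.zero_rpow (by linarith : α - 1 ≠ 0)] using this.mono_left nhdsWithin_le_nhds

variable {α m δ lam : ℝ}

lemma hv_deriv (y : ℝ) :
    HasDerivAt (fun x : ℝ => 1 + α / m * (x / δ)) (α / m * (1 / δ)) y :=
  (((hasDerivAt_id y).div_const δ).const_mul (α / m)).const_add 1

lemma hv_pos (hα : 1 < α) (hm : 0 < m) (hδ : 0 < δ) {y : ℝ} (hy : 0 ≤ y) :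
    0 < 1 + α / m * (y / δ) := by
  have h1 : 0 ≤ α / m * (y / δ) :=
    mul_nonneg (div_nonneg (by linarith) hm.le) (div_nonneg hy hδ.le)
  linarith

lemma hvpow (hα : 1 < α) (hm : 0 < m) (hδ : 0 < δ) {y : ℝ} (hy : 0 ≤ y) (q : ℝ) :
    HasDerivAt (fun x : ℝ => (1 + α / m * (x / δ)) ^ q)
      (α / m * (1 / δ) * q * (1 + α / m * (y / δ)) ^ (q - 1)) y :=
  (hv_deriv y).rpow_const (Or.inl (hv_pos hα hm hδ hy).ne')

lemma hu_deriv (y : ℝ) : HasDerivAt (fun x : ℝ => 1 - x / δ) (-(1 / δ)) y :=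
  ((hasDerivAt_id y).div_const δ).const_sub 1

lemma hupow (hδ : 0 < δ) {y : ℝ} (hy : y < δ) (p : ℝ) :
    HasDerivAt (fun x : ℝ => max (1 - x / δ) 0 ^ p)
      (-(1 / δ) * p * (1 - y / δ) ^ (p - 1)) y := by
  have hup : 0 < 1 - y / δ := sub_pos.2 ((div_lt_one hδ).2 hy)
  have hev : (fun x : ℝ => max (1 - x / δ) 0 ^ p) =ᶠ[nhds y]
      fun x : ℝ => (1 - x / δ) ^ p := by
    filter_upwards [Iio_mem_nhds hy] with x hx
    rw [max_eq_left (sub_nonneg.2 ((div_le_one hδ).2 hx.le))]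
  exact ((hu_deriv y).rpow_const (Or.inl hup.ne')).congr_of_eventuallyEq hev

lemma psi'_zero_of_ge (hα : 1 < α) (hδ : 0 < δ) {y : ℝ} (hy : δ ≤ y) :
    α / δ * (1 + α / m) * (y / δ) * max (1 - y / δ) 0 ^ (α - 1) *
      (1 + α / m * (y / δ)) ^ (m - 1) = 0 := by
  have hmax : max (1 - y / δ) 0 = 0 :=
    max_eq_right (sub_nonpos.2 ((one_le_div hδ).2 hy))
  rw [hmax, Real.zero_rpow (by linarith : α - 1 ≠ 0)]
  ring

lemma hasDerivAt_psi (hα : 1 < α) (hm : 0 < m) (hδ : 0 < δ) {y : ℝ} (hy : 0 ≤ y) :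
    HasDerivAt (fun x : ℝ => 1 - max (1 - x / δ) 0 ^ α * (1 + α / m * (x / δ)) ^ m)
      (α / δ * (1 + α / m) * (y / δ) * max (1 - y / δ) 0 ^ (α - 1) *
        (1 + α / m * (y / δ)) ^ (m - 1)) y := by
  have hα0 : (0:ℝ) < α := by linarith
  rcases lt_trichotomy y δ with hyδ | hyδ | hyδ
  · have hup : 0 < 1 - y / δ := sub_pos.2 ((div_lt_one hδ).2 hyδ)
    have hvp : 0 < 1 + α / m * (y / δ) := hv_pos hα hm hδ hy
    have H := ((hupow hδ hyδ α).mul (hvpow hα hm hδ hy m)).const_sub 1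
    refine H.congr_deriv ?_
    symm
    have hmax : max (1 - y / δ) 0 = 1 - y / δ := max_eq_left hup.le
    have e1 := Real.rpow_add_one hup.ne' (α - 1)
    rw [show α - 1 + 1 = α from by ring] at e1
    have e2 := Real.rpow_add_one hvp.ne' (m - 1)
    rw [show m - 1 + 1 = m from by ring] at e2
    rw [hmax, e1, e2]
    field_simp
    ring
  · rw [show y = δ from hyδ] at hy ⊢
    have h0 : (1 : ℝ) - δ / δ = 0 := by rw [div_self hδ.ne']; ring
    have houter : HasDerivAt (fun t : ℝ => max t 0 ^ α) 0 (1 - δ / δ) := by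
      rw [h0]; exact maxpow_zero hα
    have hg : HasDerivAt (fun x : ℝ => max (1 - x / δ) 0 ^ α) 0 δ := by
      have := houter.comp δ (hu_deriv δ)
      exact this.congr_deriv (zero_mul _)
    have H := (hg.mul (hvpow hα hm hδ hy m)).const_sub 1
    refine H.congr_deriv ?_
    symm
    rw [h0]
    simp [Real.zero_rpow (by linarith : α - 1 ≠ 0),
      Real.zero_rpow (by linarith : α ≠ 0)]
  · have hev : (fun x : ℝ => 1 - max (1 - x / δ) 0 ^ α * (1 + α / m * (x / δ)) ^ m)
        =ᶠ[nhds y] fun _ : ℝ => (1:ℝ) := by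
      filter_upwards [Ioi_mem_nhds hyδ] with x hx
      have hmax : max (1 - x / δ) 0 = 0 :=
        max_eq_right (sub_nonpos.2 ((one_le_div hδ).2 hx.le))
      rw [hmax, Real.zero_rpow hα0.ne', zero_mul, sub_zero]
    have H := (hasDerivAt_const y (1:ℝ)).congr_of_eventuallyEq hev
    refine H.congr_deriv ?_
    symm
    exact psi'_zero_of_ge hα hδ hyδ.le

lemma hasDerivAt_psi' (hα : 1 < α) (hm : 0 < m) (hδ : 0 < δ) {y : ℝ}
    (hy : y ∈ Ioo (0:ℝ) δ) :
    HasDerivAt (fun x : ℝ => α / δ * (1 + α / m) * (x / δ) * max (1 - x / δ) 0 ^ (α - 1) *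
        (1 + α / m * (x / δ)) ^ (m - 1))
      (α / δ ^ 2 * (1 + α / m) * max (1 - y / δ) 0 ^ (α - 2) *
        (1 + α / m * (y / δ)) ^ (m - 2) *
        (1 - α / m * (α + m - 1) * (y / δ) ^ 2)) y := by
  obtain ⟨hy0, hyδ⟩ := hy
  have hup : 0 < 1 - y / δ := sub_pos.2 ((div_lt_one hδ).2 hyδ)
  have hvp : 0 < 1 + α / m * (y / δ) := hv_pos hα hm hδ hy0.le
  have h1 : HasDerivAt (fun x : ℝ => α / δ * (1 + α / m) * (x / δ))
      (α / δ * (1 + α / m) * (1 / δ)) y :=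
    ((hasDerivAt_id y).div_const δ).const_mul (α / δ * (1 + α / m))
  have H := (h1.mul (hupow hδ hyδ (α - 1))).mul (hvpow hα hm hδ hy0.le (m - 1))
  refine H.congr_deriv ?_
  symm
  simp only [Pi.mul_apply]
  have hmax : max (1 - y / δ) 0 = 1 - y / δ := max_eq_left hup.le
  have e1 := Real.rpow_add_one hup.ne' (α - 2)
  rw [show α - 2 + 1 = α - 1 from by ring] at e1
  have e2 := Real.rpow_add_one hvp.ne' (m - 2)
  rw [show m - 2 + 1 = m - 1 from by ring] at e2
  rw [hmax, show α - 1 - 1 = α - 2 from by ring, show m - 1 - 1 = m - 2 from by ring,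
    e1, e2]
  field_simp
  ring



lemma psi'_nonneg (hα : 1 < α) (hm : 0 < m) (hδ : 0 < δ) {y : ℝ} (hy : 0 ≤ y) :
    0 ≤ α / δ * (1 + α / m) * (y / δ) * max (1 - y / δ) 0 ^ (α - 1) *
      (1 + α / m * (y / δ)) ^ (m - 1) := by
  have h1 : (0:ℝ) ≤ α / δ := div_nonneg (by linarith) hδ.le
  have h2 : (0:ℝ) ≤ 1 + α / m := by
    have := div_nonneg (le_of_lt (by linarith : (0:ℝ) < α)) hm.le; linarith
  have h3 : 0 ≤ y / δ := div_nonneg hy hδ.le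
  exact mul_nonneg (mul_nonneg (mul_nonneg (mul_nonneg h1 h2) h3)
    (Real.rpow_nonneg (le_max_right _ _) _)) (Real.rpow_nonneg (hv_pos hα hm hδ hy).le _)

lemma cont_psi' (hα : 1 < α) (hm : 0 < m) (hδ : 0 < δ) :
    ContinuousOn (fun y : ℝ => α / δ * (1 + α / m) * (y / δ) * max (1 - y / δ) 0 ^ (α - 1) *
      (1 + α / m * (y / δ)) ^ (m - 1)) (Ici 0) := by
  intro y hy
  have hy0 : (0:ℝ) ≤ y := mem_Ici.1 hy
  have c1 : ContinuousAt (fun x : ℝ => α / δ * (1 + α / m) * (x / δ)) y :=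
    (continuous_const.mul (continuous_id.div_const δ)).continuousAt
  have c2 : ContinuousAt (fun x : ℝ => max (1 - x / δ) 0 ^ (α - 1)) y := by
    apply ContinuousAt.rpow_const
    · exact ((continuous_const.sub (continuous_id.div_const δ)).max
        continuous_const).continuousAt
    · exact Or.inr (by linarith)
  have c3 : ContinuousAt (fun x : ℝ => (1 + α / m * (x / δ)) ^ (m - 1)) y := by
    apply ContinuousAt.rpow_const
    · exact (continuous_const.add (continuous_const.mul (continuous_id.div_const δ))).continuousAt
    · exact Or.inl (hv_pos hα hm hδ hy0).ne'
  exact ((c1.mul c2).mul c3).continuousWithinAt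

lemma step3 (hα : 1 < α) (hm : 0 < m) (hδ : 0 < δ) (hlam0 : 0 < lam) (hlam1 : lam < 1)
    (hmα : m ≤ α) (hid' : α / m * (α + m - 1) = 1 / lam ^ 2) {y : ℝ}
    (hy : y ∈ Ioo (0:ℝ) δ) :
    0 ≤ α / δ * (1 + α / m) * (y / δ) * max (1 - y / δ) 0 ^ (α - 1) *
        (1 + α / m * (y / δ)) ^ (m - 1) -
      y * (α / δ ^ 2 * (1 + α / m) * max (1 - y / δ) 0 ^ (α - 2) *
        (1 + α / m * (y / δ)) ^ (m - 2) * (1 - α / m * (α + m - 1) * (y / δ) ^ 2)) := by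
  obtain ⟨hy0, hyδ⟩ := hy
  have hup : 0 < 1 - y / δ := sub_pos.2 ((div_lt_one hδ).2 hyδ)
  have hvp : 0 < 1 + α / m * (y / δ) := hv_pos hα hm hδ hy0.le
  have hmax : max (1 - y / δ) 0 = 1 - y / δ := max_eq_left hup.le
  have e1 := Real.rpow_add_one hup.ne' (α - 2)
  rw [show α - 2 + 1 = α - 1 from by ring] at e1
  have e2 := Real.rpow_add_one hvp.ne' (m - 2)
  rw [show m - 2 + 1 = m - 1 from by ring] at e2
  rw [hmax, e1, e2, hid']
  set P := (1 - y / δ) ^ (α - 2) with hP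
  set Q := (1 + α / m * (y / δ)) ^ (m - 2) with hQ
  have hPpos : 0 < P := Real.rpow_pos_of_pos hup _
  have hQpos : 0 < Q := Real.rpow_pos_of_pos hvp _
  have ht0 : 0 < y / δ := div_pos hy0 hδ
  have ht1 : y / δ < 1 := (div_lt_one hδ).2 hyδ
  have hαm : 1 ≤ α / m := (le_div_iff₀ hm).2 (by linarith)
  have hl2 : lam ^ 2 < 1 := by nlinarith
  have hl2' : (0:ℝ) < lam ^ 2 := by positivity
  have hinv : 1 ≤ 1 / lam ^ 2 := by rw [le_div_iff₀ hl2']; linarith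
  have key : 0 ≤ (1 - y / δ) * (1 + α / m * (y / δ)) - 1 + (y / δ) ^ 2 * (1 / lam ^ 2) := by
    have h1 : 0 ≤ (1 - y / δ) * (α / m - 1) :=
      mul_nonneg (by linarith) (by linarith)
    have h2 : 0 ≤ (y / δ) * (1 / lam ^ 2 - 1) := mul_nonneg ht0.le (by linarith)
    have hident : (1 - y / δ) * (1 + α / m * (y / δ)) - 1 + (y / δ) ^ 2 * (1 / lam ^ 2)
        = (y / δ) * ((1 - y / δ) * (α / m - 1) + (y / δ) * (1 / lam ^ 2 - 1)) := by
      ring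
    rw [hident]
    exact mul_nonneg ht0.le (by linarith)
  have hpos : 0 ≤ α / δ * (1 + α / m) * P * Q * (y / δ) := by
    have h1 : (0:ℝ) ≤ α / δ := div_nonneg (by linarith) hδ.le
    have h2 : (0:ℝ) ≤ 1 + α / m := by linarith
    exact mul_nonneg (mul_nonneg (mul_nonneg (mul_nonneg h1 h2) hPpos.le) hQpos.le) ht0.le
  have final := mul_nonneg hpos key
  have expand : α / δ * (1 + α / m) * (y / δ) * (P * (1 - y / δ)) *
        (Q * (1 + α / m * (y / δ))) -
      y * (α / δ ^ 2 * (1 + α / m) * P * Q * (1 - 1 / lam ^ 2 * (y / δ) ^ 2)) =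
      α / δ * (1 + α / m) * P * Q * (y / δ) *
        ((1 - y / δ) * (1 + α / m * (y / δ)) - 1 + (y / δ) ^ 2 * (1 / lam ^ 2)) := by
    ring
  rw [expand]
  exact final

end S15

open S15

/-- properties of the intrinsic PPR one-dimensional density. -/
theorem statement15 (α Φ σ lam : ℝ) (hα : 1 < α) (hΦ : 0 < Φ) (hσ : 0 < σ)
    (hlam₀ : 0 < lam) (hlam : lam ≤ 1 / Real.sqrt (2 * α - 1)) :
    let m : ℝ := α * (α - 1) * lam ^ 2 / (1 - α * lam ^ 2)
    let δ : ℝ := (Φ / σ) * (α * lam) * (1 - lam) ^ (α - 1) * (1 + α / m) *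
      (1 + lam * α / m) ^ (m - 1)
    let ψ : ℝ → ℝ := fun y =>
      1 - (max (1 - y / δ) 0) ^ α * (1 + (α / m) * (y / δ)) ^ m
    let ψ' : ℝ → ℝ := fun y =>
      (α / δ) * (1 + α / m) * (y / δ) * (max (1 - y / δ) 0) ^ (α - 1) *
        (1 + (α / m) * (y / δ)) ^ (m - 1)
    let ψ'' : ℝ → ℝ := fun y =>
      (α / δ ^ 2) * (1 + α / m) * (max (1 - y / δ) 0) ^ (α - 2) *
        (1 + (α / m) * (y / δ)) ^ (m - 2) *
        (1 - (α / m) * (α + m - 1) * (y / δ) ^ 2)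
    -- (i)
    (∀ y : ℝ, 0 ≤ y → 0 ≤ ψ y) ∧ ψ 0 = 0 ∧ ψ' 0 = 0 ∧
    -- (ii)
    (∀ y : ℝ, 0 ≤ y → HasDerivAt ψ (ψ' y) y) ∧ ContinuousOn ψ' (Ici 0) ∧
    MonotoneOn ψ (Ici 0) ∧ (∀ y : ℝ, 0 ≤ y → ψ y ≤ 1) ∧ ψ δ = 1 ∧
    -- (iii)
    (∀ y ∈ Ioo (0:ℝ) δ, HasDerivAt ψ' (ψ'' y) y ∧ 0 ≤ ψ' y - y * ψ'' y) ∧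
    -- (iv)
    ConcaveOn ℝ (Ici (δ * lam)) ψ := by
  intro m δ ψ ψ' ψ''
  have h2α : (0:ℝ) < 2 * α - 1 := by linarith
  have hsq : 0 < Real.sqrt (2 * α - 1) := Real.sqrt_pos.2 h2α
  have hkey : (2 * α - 1) * lam ^ 2 ≤ 1 := by
    have h1 : lam ^ 2 ≤ (1 / Real.sqrt (2 * α - 1)) ^ 2 :=
      pow_le_pow_left₀ hlam₀.le hlam 2
    rw [div_pow, one_pow, Real.sq_sqrt h2α.le] at h1
    have := mul_le_mul_of_nonneg_left h1 h2α.le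
    rwa [mul_one_div, div_self h2α.ne'] at this
  have hl2 : 0 < lam ^ 2 := by positivity
  have hal : 0 < 1 - α * lam ^ 2 := by nlinarith
  have hm : 0 < m := by
    show 0 < α * (α - 1) * lam ^ 2 / (1 - α * lam ^ 2)
    exact div_pos (mul_pos (mul_pos (by linarith) (by linarith)) hl2) hal
  have hmα : m ≤ α := by
    show α * (α - 1) * lam ^ 2 / (1 - α * lam ^ 2) ≤ α
    rw [div_le_iff₀ hal]
    nlinarith
  have hmval : m * (1 - α * lam ^ 2) = α * (α - 1) * lam ^ 2 := by
    show α * (α - 1) * lam ^ 2 / (1 - α * lam ^ 2) * (1 - α * lam ^ 2)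
        = α * (α - 1) * lam ^ 2
    exact div_mul_cancel₀ _ hal.ne'
  have hid : α * (α + m - 1) * lam ^ 2 = m := by linear_combination -hmval
  have hid' : α / m * (α + m - 1) = 1 / lam ^ 2 := by
    field_simp
    linear_combination hid
  have hlam1 : lam < 1 := by nlinarith
  have hδ : 0 < δ := by
    have h1 : (0:ℝ) < 1 + α / m := by
      have := div_pos (by linarith : (0:ℝ) < α) hm; linarith
    have h2 : (0:ℝ) < 1 - lam := by linarith
    have h3 : (0:ℝ) < 1 + lam * α / m := by
      have : 0 < lam * α / m := div_pos (mul_pos hlam₀ (by linarith)) hm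
      linarith
    exact mul_pos (mul_pos (mul_pos (mul_pos (div_pos hΦ hσ)
      (mul_pos (by linarith) hlam₀)) (Real.rpow_pos_of_pos h2 _)) h1)
      (Real.rpow_pos_of_pos h3 _)
  -- basic facts
  have hψd : ∀ y : ℝ, 0 ≤ y → HasDerivAt ψ (ψ' y) y := fun y hy =>
    hasDerivAt_psi hα hm hδ hy
  have hψ'cont : ContinuousOn ψ' (Ici 0) := cont_psi' hα hm hδ
  have hψ'nn : ∀ y : ℝ, 0 ≤ y → 0 ≤ ψ' y := fun y hy => psi'_nonneg hα hm hδ hy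
  have hψcont : ContinuousOn ψ (Ici 0) := fun y hy =>
    ((hψd y (mem_Ici.1 hy)).continuousAt).continuousWithinAt
  have hψ0 : ψ 0 = 0 := by
    show 1 - (max (1 - 0 / δ) 0) ^ α * (1 + (α / m) * (0 / δ)) ^ m = 0
    norm_num [Real.one_rpow]
  have hmono : MonotoneOn ψ (Ici 0) := by
    apply monotoneOn_of_deriv_nonneg (convex_Ici 0) hψcont
    · rw [interior_Ici]
      exact fun y hy => ((hψd y (le_of_lt hy)).differentiableAt).differentiableWithinAt
    · rw [interior_Ici]
      intro y hy
      rw [(hψd y hy.le).deriv]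
      exact hψ'nn y hy.le
  have hψ'zero : ∀ x : ℝ, δ ≤ x → ψ' x = 0 := fun x hx => psi'_zero_of_ge hα hδ hx
  have hdl : 0 < δ * lam := mul_pos hδ hlam₀
  have hdld : δ * lam < δ := by nlinarith
  refine ⟨?_, hψ0, ?_, hψd, hψ'cont, hmono, ?_, ?_, ?_, ?_⟩
  · -- nonneg
    intro y hy
    have := hmono (mem_Ici.2 le_rfl) (mem_Ici.2 hy) hy
    rwa [hψ0] at this
  · -- ψ' 0 = 0
    show (α / δ) * (1 + α / m) * (0 / δ) * (max (1 - 0 / δ) 0) ^ (α - 1) *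
        (1 + (α / m) * (0 / δ)) ^ (m - 1) = 0
    norm_num
  · -- ψ ≤ 1
    intro y hy
    show 1 - (max (1 - y / δ) 0) ^ α * (1 + (α / m) * (y / δ)) ^ m ≤ 1
    have : 0 ≤ (max (1 - y / δ) 0) ^ α * (1 + (α / m) * (y / δ)) ^ m :=
      mul_nonneg (Real.rpow_nonneg (le_max_right _ _) _)
        (Real.rpow_nonneg (hv_pos hα hm hδ hy).le _)
    linarith
  · -- ψ δ = 1
    show 1 - (max (1 - δ / δ) 0) ^ α * (1 + (α / m) * (δ / δ)) ^ m = 1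
    rw [div_self hδ.ne']
    norm_num [Real.zero_rpow (by linarith : α ≠ 0)]
  · -- (iii)
    intro y hy
    refine ⟨hasDerivAt_psi' hα hm hδ hy, ?_⟩
    exact step3 hα hm hδ hlam₀ hlam1 hmα hid' hy
  · -- (iv)
    have hanti1 : AntitoneOn ψ' (Icc (δ * lam) δ) := by
      apply antitoneOn_of_deriv_nonpos (convex_Icc _ _)
      · exact hψ'cont.mono (fun x hx => (hdl.le.trans hx.1 : (0:ℝ) ≤ x))
      · rw [interior_Icc]
        exact fun x hx => (hasDerivAt_psi' hα hm hδ
          ⟨hdl.trans hx.1, hx.2⟩).differentiableAt.differentiableWithinAt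
      · rw [interior_Icc]
        intro x hx
        rw [(hasDerivAt_psi' hα hm hδ ⟨hdl.trans hx.1, hx.2⟩).deriv]
        have hup : 0 < 1 - x / δ := sub_pos.2 ((div_lt_one hδ).2 hx.2)
        have hvp : 0 < 1 + α / m * (x / δ) :=
          hv_pos hα hm hδ (le_of_lt (hdl.trans hx.1))
        have ht : lam ≤ x / δ := by
          rw [le_div_iff₀ hδ]
          nlinarith [hx.1]
        have hbr : 1 - α / m * (α + m - 1) * (x / δ) ^ 2 ≤ 0 := by
          rw [hid']
          have h2 : lam ^ 2 ≤ (x / δ) ^ 2 := pow_le_pow_left₀ hlam₀.le ht 2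
          have : 1 ≤ (x / δ) ^ 2 / lam ^ 2 := (one_le_div hl2).2 h2
          rw [div_mul_eq_mul_div, one_mul]
          linarith
        have hpre : 0 ≤ α / δ ^ 2 * (1 + α / m) * max (1 - x / δ) 0 ^ (α - 2) *
            (1 + α / m * (x / δ)) ^ (m - 2) := by
          have h1 : (0:ℝ) ≤ α / δ ^ 2 := by positivity
          have h2 : (0:ℝ) ≤ 1 + α / m := by
            have := div_pos (by linarith : (0:ℝ) < α) hm; linarith
          exact mul_nonneg (mul_nonneg (mul_nonneg h1 h2)
            (Real.rpow_nonneg (le_max_right _ _) _)) (Real.rpow_nonneg hvp.le _)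
        exact mul_nonpos_iff.2 (Or.inl ⟨hpre, hbr⟩)
    have hanti : AntitoneOn ψ' (Ioi (δ * lam)) := by
      intro a ha b hb hab
      rcases le_or_gt b δ with hbδ | hbδ
      · exact hanti1 ⟨(mem_Ioi.1 ha).le, hab.trans hbδ⟩ ⟨(mem_Ioi.1 hb).le, hbδ⟩ hab
      · rw [hψ'zero b hbδ.le]
        exact hψ'nn a (hdl.le.trans (mem_Ioi.1 ha).le)
    apply AntitoneOn.concaveOn_of_deriv (convex_Ici _)
    · exact fun x hx => ((hψd x (hdl.le.trans (mem_Ici.1 hx))).continuousAt).continuousWithinAt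
    · rw [interior_Ici]
      exact fun x hx =>
        ((hψd x (hdl.trans (mem_Ioi.1 hx)).le).differentiableAt).differentiableWithinAt
    · rw [interior_Ici]
      intro a ha b hb hab
      rw [(hψd a (hdl.trans (mem_Ioi.1 ha)).le).deriv,
        (hψd b (hdl.trans (mem_Ioi.1 hb)).le).deriv]
      exact hanti ha hb hab
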